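/- Suppose for every increasing sequence (n_i) of naturals there exist an increasing sequence (i_k) and y ∈ 2^ω such that for every x ∈ X and all sufficiently large k there is l ∈ [i_k, i_{k+1}) with x↾[n_l, n_{l+1}) = y↾[n_l, n_{l+1}). Then X + Lim T is meager for every nowhere dense tree T on 2^{<ω}; in particular X is meager-additive. -/

import Mathlib

open MeasureTheory Pointwise

/-- Cantor space `2^ω` with componentwise addition mod 2. -/
abbrev Cantor : Type := ℕ → ZMod 2
/-- Finite binary sequences, the nodes of `2^{<ω}`. -/
abbrev FinSeq : Type := List (ZMod 2)

instance : TopologicalSpace (ZMod 2) := ⊥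
instance : DiscreteTopology (ZMod 2) := ⟨rfl⟩
noncomputable instance : MeasurableSpace Cantor := borel Cantor
instance : BorelSpace Cantor := ⟨rfl⟩

/-- The uniform (Lebesgue) product measure on `2^ω`, realized as the Haar measure of the
compact group `2^ω` normalized so that the whole space has measure 1. -/
noncomputable def μC : Measure Cantor := Measure.addHaarMeasure ⊤

/-- `X` is null-additive: `X + A` is null for every null `A`. -/
def NullAdditive (X : Set Cantor) : Prop := ∀ A : Set Cantor, μC A = 0 → μC (X + A) = 0

/-- `X` is meager-additive: `X + A` is meager for every meager `A`. -/
def MeagerAdditive (X : Set Cantor) : Prop := ∀ A : Set Cantor, IsMeagre A → IsMeagre (X + A)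

/-- A tree on `2^{<ω}`: nonempty, closed under initial segments, and every node has
extensions in the tree of every greater length. -/
def IsTree (T : Set FinSeq) : Prop :=
  T.Nonempty ∧ (∀ σ τ : FinSeq, σ <+: τ → τ ∈ T → σ ∈ T) ∧
    ∀ σ ∈ T, ∀ n, σ.length < n → ∃ τ ∈ T, σ <+: τ ∧ τ.length = n

/-- Restriction `x↾n` of `x ∈ 2^ω`. -/
def res (x : Cantor) (n : ℕ) : FinSeq := (List.range n).map x

/-- `Lim T = {x ∈ 2^ω : ∀ n, x↾n ∈ T}`. -/
def LimT (T : Set FinSeq) : Set Cantor := {x | ∀ n, res x n ∈ T}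

/-- A nowhere dense tree: every node has an extension outside the tree. -/
def NwdTree (T : Set FinSeq) : Prop := ∀ η ∈ T, ∃ τ : FinSeq, η <+: τ ∧ τ ∉ T

/-- Componentwise mod-2 addition of finite sequences (of the same length). -/
def finAdd : FinSeq → FinSeq → FinSeq := List.zipWith (· + ·)

/-- `T + S = {η + σ : η ∈ T, σ ∈ S, same length}`. -/
def treeSum (T S : Set FinSeq) : Set FinSeq :=
  {ρ | ∃ η ∈ T, ∃ σ ∈ S, η.length = σ.length ∧ ρ = finAdd η σ}

/-- `T^{[η]} = {τ ∈ T : τ ⊑ η or η ⊑ τ}`. -/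
def through (T : Set FinSeq) (η : FinSeq) : Set FinSeq := {τ ∈ T | τ <+: η ∨ η <+: τ}

/-- `A^{fin}`: points agreeing with some point of `A` at all but finitely many coordinates. -/
def finEq (A : Set Cantor) : Set Cantor := {y | ∃ x ∈ A, ∀ᶠ n in Filter.atTop, y n = x n}

/-- `U^{⟨ν⟩} = {τ : ν⌢τ ∈ U}`. -/
def above (U : Set FinSeq) (ν : FinSeq) : Set FinSeq := {τ | ν ++ τ ∈ U}

/-- A corset: a nondecreasing function `ω → ω \ {0}` tending to infinity. -/
def Corset (f : ℕ → ℕ) : Prop :=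
  Monotone f ∧ (∀ n, 0 < f n) ∧ Filter.Tendsto f Filter.atTop Filter.atTop

/-- `S` is of width `f`: `|S ∩ 2^n| ≤ f n` for all `n`. -/
def widthLe (S : Set FinSeq) (f : ℕ → ℕ) : Prop := ∀ n, {τ ∈ S | τ.length = n}.ncard ≤ f n

/-- `S` is almost of width `f`: `|S ∩ 2^n| ≤ f n` for all sufficiently large `n`. -/
def almostWidthLe (S : Set FinSeq) (f : ℕ → ℕ) : Prop :=
  ∀ᶠ n in Filter.atTop, {τ ∈ S | τ.length = n}.ncard ≤ f n

/-- Condition (b) of Theorem 18. -/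
def MatchProp (X : Set Cantor) : Prop :=
  ∀ n : ℕ → ℕ, StrictMono n →
    ∃ i : ℕ → ℕ, StrictMono i ∧ ∃ y : Cantor,
      ∀ x ∈ X, ∀ᶠ k in Filter.atTop, ∃ l, i k ≤ l ∧ l < i (k + 1) ∧
        ∀ m, n l ≤ m → m < n (l + 1) → x m = y m

section Aux

open Filter

lemma zmod2_aab : ∀ a b : ZMod 2, a + b + b = a := by decide

lemma res_length (x : Cantor) (n : ℕ) : (res x n).length = n := by
  simp [res]

lemma res_getElem (x : Cantor) {n j : ℕ} (h : j < n) :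
    (res x n)[j]'(by simpa [res_length]) = x j := by
  simp [res]

lemma res_take (x : Cantor) {a b : ℕ} (h : a ≤ b) : (res x b).take a = res x a := by
  simp [res, ← List.map_take, List.take_range, Nat.min_eq_left h]

lemma res_prefix (x : Cantor) {a b : ℕ} (h : a ≤ b) : res x a <+: res x b := by
  rw [← res_take x h]; exact List.take_prefix _ _

lemma res_getD (x : Cantor) {n m : ℕ} (h : m < n) : (res x n).getD m 0 = x m := by
  rw [List.getD_eq_getElem _ _ (by simpa [res_length]), res_getElem x h]

lemma res_agree {x y : Cantor} {N : ℕ} :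
    res x N = res y N ↔ ∀ m, m < N → x m = y m := by
  constructor
  · intro h m hm
    have := congrArg (fun l => l.getD m 0) h
    rwa [res_getD x hm, res_getD y hm] at this
  · intro h
    apply List.ext_getElem (by simp [res_length])
    intro j h1 h2
    have hj : j < N := by simpa [res_length] using h1
    rw [res_getElem x hj, res_getElem y hj]; exact h j hj

lemma res_append {t : Cantor} {a : ℕ} {s : FinSeq}
    (hs : ∀ j, j < s.length → t (a + j) = s.getD j 0) :
    res t (a + s.length) = res t a ++ s := by
  apply List.ext_getElem (by simp [res_length])
  intro j h1 h2
  have hj : j < a + s.length := by simpa [res_length] using h1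
  rw [res_getElem t hj]
  rcases Nat.lt_or_ge j a with hja | hja
  · rw [List.getElem_append_left (by simpa [res_length])]
    exact (res_getElem t hja).symm
  · have hjs : j - a < s.length := by omega
    rw [List.getElem_append_right (by simpa [res_length]) ]
    have : t (a + (j - a)) = s.getD (j - a) 0 := hs _ hjs
    rw [show a + (j - a) = j by omega] at this
    rw [this, List.getD_eq_getElem _ _ (by simpa [res_length])]
    congr 1
    simp [res_length]

/-- Cylinders are open. -/
lemma isOpen_cyl (v : Cantor) (N : ℕ) : IsOpen {z : Cantor | ∀ m, m < N → z m = v m} := by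
  have : {z : Cantor | ∀ m, m < N → z m = v m} =
      Set.pi (Set.Iio N) (fun m => {v m}) := by
    ext z; simp [Set.mem_pi, Set.mem_Iio]
  rw [this]
  exact isOpen_set_pi (Set.finite_Iio N) (fun a _ => isOpen_discrete _)

/-- In an open set, every point has a cylinder neighborhood inside it. -/
lemma exists_cyl_subset {U : Set Cantor} (hU : IsOpen U) {z : Cantor} (hz : z ∈ U) :
    ∃ N, ∀ z' : Cantor, (∀ m, m < N → z' m = z m) → z' ∈ U := by
  have hmem : U ∈ nhds z := hU.mem_nhds hz
  rw [nhds_pi, Filter.mem_pi] at hmem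
  obtain ⟨I, hIf, t, ht, hsub⟩ := hmem
  obtain ⟨N, hN⟩ := hIf.bddAbove
  refine ⟨N + 1, fun z' hz' => hsub fun i hi => ?_⟩
  have : z' i = z i := hz' i (Nat.lt_succ_of_le (hN hi))
  rw [this]
  exact mem_of_mem_nhds (ht i)

/-- A set whose membership depends on finitely many coordinates is open. -/
lemma isOpen_of_dep {S : Set Cantor} {N : ℕ}
    (hdep : ∀ z z' : Cantor, (∀ m, m < N → z m = z' m) → z ∈ S → z' ∈ S) : IsOpen S := by
  rw [isOpen_iff_mem_nhds]
  intro z hz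
  rw [mem_nhds_iff]
  exact ⟨{z' | ∀ m, m < N → z' m = z m}, fun z' hz' => hdep z z' (fun m hm => (hz' m hm).symm) hz,
    isOpen_cyl z N, fun m _ => rfl⟩

lemma isClosed_of_dep {S : Set Cantor} {N : ℕ}
    (hdep : ∀ z z' : Cantor, (∀ m, m < N → z m = z' m) → z ∈ S → z' ∈ S) : IsClosed S := by
  rw [← isOpen_compl_iff]
  apply isOpen_of_dep (N := N)
  intro z z' hag hz hz'
  exact hz (hdep z' z (fun m hm => (hag m hm).symm) hz')

/-- A single nowhere dense set is meagre. -/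
lemma IsNowhereDense.isMeagre' {s : Set Cantor} (h : IsNowhereDense s) : IsMeagre s :=
  isMeagre_iff_countable_union_isNowhereDense.mpr
    ⟨{s}, by simpa using h, Set.countable_singleton s, by simp⟩

/-- All binary sequences of length `n`. -/
def allSeqs : ℕ → List FinSeq
  | 0 => [[]]
  | n + 1 => (allSeqs n).map (List.cons 0) ++ (allSeqs n).map (List.cons 1)

lemma mem_allSeqs : ∀ (n : ℕ) (h : FinSeq), h.length = n → h ∈ allSeqs n := by
  intro n
  induction n with
  | zero => intro h hh; simp [allSeqs, List.length_eq_zero_iff.mp hh]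
  | succ n ih =>
    intro h hh
    match h with
    | [] => simp at hh
    | a :: h' =>
      have hlen : h'.length = n := by simpa using hh
      have ha : a = 0 ∨ a = 1 := (by decide : ∀ b : ZMod 2, b = 0 ∨ b = 1) a
      rcases ha with rfl | rfl
      · exact List.mem_append.mpr (Or.inl (List.mem_map.mpr ⟨h', ih h' hlen, rfl⟩))
      · exact List.mem_append.mpr (Or.inr (List.mem_map.mpr ⟨h', ih h' hlen, rfl⟩))

/-- Escape lemma: a finite list of heads can be simultaneously pushed out of a nwd tree. -/
lemma escape {T : Set FinSeq} (hpre : ∀ σ τ : FinSeq, σ <+: τ → τ ∈ T → σ ∈ T)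
    (hnwd : NwdTree T) (L : List FinSeq) : ∃ s : FinSeq, ∀ h ∈ L, h ++ s ∉ T := by
  induction L with
  | nil => exact ⟨[], by simp⟩
  | cons a L ih =>
    obtain ⟨s, hs⟩ := ih
    by_cases hmem : a ++ s ∈ T
    · obtain ⟨τ, hpref, hτ⟩ := hnwd _ hmem
      obtain ⟨r, rfl⟩ := hpref
      refine ⟨s ++ r, fun h hh => ?_⟩
      rcases List.mem_cons.mp hh with rfl | hh'
      · rw [← List.append_assoc]; exact hτ
      · intro hT
        exact hs h hh' (hpre _ _ ⟨r, by rw [List.append_assoc]⟩ hT)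
    · refine ⟨s, fun h hh => ?_⟩
      rcases List.mem_cons.mp hh with rfl | hh'
      · exact hmem
      · exact hs h hh'

/-- Main avoidance lemma: for each level `m` there is a nonempty segment `s` such that no
node of `T` of length `m + |s|` has `s` as its segment on `[m, m+|s|)`. -/
lemma avoid {T : Set FinSeq} (hpre : ∀ σ τ : FinSeq, σ <+: τ → τ ∈ T → σ ∈ T)
    (hnwd : NwdTree T) (m : ℕ) :
    ∃ s : FinSeq, 0 < s.length ∧ ∀ h : FinSeq, h.length = m → h ++ s ∉ T := by
  obtain ⟨s, hs⟩ := escape hpre hnwd (allSeqs m)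
  refine ⟨s ++ [0], by simp, fun h hh hT => ?_⟩
  have : h ++ s ∈ T := hpre _ _ ⟨[0], by rw [List.append_assoc]⟩ hT
  exact hs h (mem_allSeqs m h hh) this

end Aux

/-- Main lemma: `X + Lim T` is meagre for a prefix-closed nowhere dense tree `T`. -/
lemma part1 {X : Set Cantor} (h : MatchProp X) {T : Set FinSeq}
    (hpre : ∀ σ τ : FinSeq, σ <+: τ → τ ∈ T → σ ∈ T) (hnwd : NwdTree T) :
    IsMeagre (X + LimT T) := by
  classical
  -- choose avoiding segments and levels
  choose S hSpos hSav using avoid hpre hnwd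
  set n : ℕ → ℕ := fun k => Nat.rec 0 (fun _ p => p + (S p).length) k with hn
  have hnsucc : ∀ l, n (l + 1) = n l + (S (n l)).length := fun l => rfl
  have hn0 : n 0 = 0 := rfl
  have hmono : StrictMono n := strictMono_nat_of_lt_succ fun l => by
    have := hSpos (n l); rw [hnsucc]; omega
  obtain ⟨i, hi, y, hy⟩ := h n hmono
  -- the covering closed nowhere dense sets
  set Q : ℕ → Cantor → Prop := fun k z => ∃ l, i k ≤ l ∧ l < i (k + 1) ∧
      ∃ t : Cantor, res t (n (l + 1)) ∈ T ∧
        ∀ m, n l ≤ m → m < n (l + 1) → t m = z m + y m with hQ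
  set E : ℕ → Set Cantor := fun K => ⋂ k, {z | K ≤ k → Q k z} with hE
  -- inclusion
  have hincl : X + LimT T ⊆ ⋃ K, E K := by
    intro z hz
    rw [Set.mem_add] at hz
    obtain ⟨x, hx, a, ha, hxa⟩ := hz
    obtain ⟨K, hK⟩ := (Filter.eventually_atTop).mp (hy x hx)
    refine Set.mem_iUnion.mpr ⟨K, Set.mem_iInter.mpr fun k => fun hKk => ?_⟩
    obtain ⟨l, hl1, hl2, hag⟩ := hK k hKk
    refine ⟨l, hl1, hl2, a, ha (n (l + 1)), fun m hm1 hm2 => ?_⟩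
    have hsum : x m + a m = z m := by
      have := congrFun hxa m; simpa using this
    have hxy : x m = y m := hag m hm1 hm2
    calc a m = x m + a m + x m := by rw [add_comm (x m) (a m), zmod2_aab]
    _ = z m + y m := by rw [hsum, hxy]
  -- each E K is closed
  have hclosed : ∀ K, IsClosed (E K) := by
    intro K
    apply isClosed_iInter
    intro k
    by_cases hKk : K ≤ k
    · have : {z : Cantor | K ≤ k → Q k z} = {z | Q k z} := by
        ext z; simp [hKk]
      rw [this]
      apply isClosed_of_dep (N := n (i (k + 1)))
      intro z z' hag ⟨l, hl1, hl2, t, ht, hagt⟩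
      refine ⟨l, hl1, hl2, t, ht, fun m hm1 hm2 => ?_⟩
      have hmN : m < n (i (k + 1)) := lt_of_lt_of_le hm2 (hmono.monotone hl2)
      rw [← hag m hmN]
      exact hagt m hm1 hm2
    · have : {z : Cantor | K ≤ k → Q k z} = Set.univ := by
        ext z; simp [hKk]
      rw [this]; exact isClosed_univ
  -- each E K has empty interior
  have hint : ∀ K, interior (E K) = ∅ := by
    intro K
    rw [Set.eq_empty_iff_forall_notMem]
    intro z hz
    obtain ⟨N, hN⟩ := exists_cyl_subset isOpen_interior hz
    set k := max K N with hk
    have hkN : N ≤ n (i k) := by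
      calc N ≤ k := le_max_right _ _
      _ ≤ i k := hi.le_apply
      _ ≤ n (i k) := hmono.le_apply
    -- the block-locating function
    set L : ℕ → ℕ := fun m => Nat.findGreatest (fun l => n l ≤ m) m with hLdef
    have hL1 : ∀ m, n (L m) ≤ m := fun m =>
      Nat.findGreatest_spec (P := fun l => n l ≤ m) (Nat.zero_le m) (by simp [hn0])
    have hL2 : ∀ m, m < n (L m + 1) := by
      intro m
      by_contra hcon
      push_neg at hcon
      have h1 : L m + 1 ≤ m := le_trans hmono.le_apply hcon
      exact Nat.findGreatest_is_greatest (Nat.lt_succ_self _) h1 hcon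
    have hLuniq : ∀ l m, n l ≤ m → m < n (l + 1) → L m = l := by
      intro l m h1 h2
      rcases lt_trichotomy (L m) l with hlt | heq | hgt
      · have : n (L m + 1) ≤ n l := hmono.monotone hlt
        exact absurd (lt_of_lt_of_le (hL2 m) (le_trans this h1)) (lt_irrefl m)
      · exact heq
      · have : n (l + 1) ≤ n (L m) := hmono.monotone hgt
        exact absurd (lt_of_lt_of_le h2 (le_trans this (hL1 m))) (lt_irrefl m)
    -- the diagonal point
    set z' : Cantor := fun m =>
      if m < n (i k) then z m else (S (n (L m))).getD (m - n (L m)) 0 + y m with hz'def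
    have hz'E : z' ∈ E K := interior_subset (hN z' fun m hm => by
      rw [hz'def]; simp only; rw [if_pos (lt_of_lt_of_le hm hkN)])
    have hQk : Q k z' := Set.mem_iInter.mp hz'E k (le_max_left _ _)
    obtain ⟨l, hl1, hl2, t, htT, hagt⟩ := hQk
    -- compute t on the block [n l, n (l+1))
    have hseg : ∀ j, j < (S (n l)).length → t (n l + j) = (S (n l)).getD j 0 := by
      intro j hj
      have hm1 : n l ≤ n l + j := Nat.le_add_right _ _
      have hm2 : n l + j < n (l + 1) := by rw [hnsucc]; omega
      have hLm : L (n l + j) = l := hLuniq l _ hm1 hm2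
      have hnot : ¬ (n l + j < n (i k)) := by
        push_neg
        exact le_trans (hmono.monotone hl1) hm1
      have hz'm : z' (n l + j) = (S (n l)).getD j 0 + y (n l + j) := by
        rw [hz'def]; simp only; rw [if_neg hnot, hLm, Nat.add_sub_cancel_left]
      rw [hagt _ hm1 hm2, hz'm]
      exact zmod2_aab _ _
    have hres : res t (n (l + 1)) = res t (n l) ++ S (n l) := by
      rw [hnsucc]; exact res_append hseg
    exact hSav (n l) (res t (n l)) (res_length t (n l)) (hres ▸ htT)
  -- conclude
  refine IsMeagre.mono hincl (isMeagre_iUnion fun K => ?_)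
  exact IsNowhereDense.isMeagre' (((hclosed K).isNowhereDense_iff).mpr (hint K))

/-- `X + F` is meagre for every closed set `F` with empty interior. -/
lemma part2 {X : Set Cantor} (h : MatchProp X) {F : Set Cantor}
    (hFc : IsClosed F) (hFi : interior F = ∅) : IsMeagre (X + F) := by
  rcases F.eq_empty_or_nonempty with rfl | ⟨x0, hx0⟩
  · refine IsMeagre.mono ?_ IsMeagre.empty
    intro z hz
    rw [Set.mem_add] at hz
    obtain ⟨_, _, _, ha, _⟩ := hz
    exact ha
  · set T : Set FinSeq := {σ | ∃ x ∈ F, res x σ.length = σ} with hT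
    have hpre : ∀ σ τ : FinSeq, σ <+: τ → τ ∈ T → σ ∈ T := by
      intro σ τ hστ ⟨x, hx, hres⟩
      refine ⟨x, hx, ?_⟩
      have h1 : σ = τ.take σ.length := List.prefix_iff_eq_take.mp hστ
      conv_rhs => rw [h1, ← hres]
      rw [res_take x hστ.length_le]
    have hnwd : NwdTree T := by
      intro σ ⟨x, hx, hres⟩
      -- the cylinder of σ is open nonempty, so not contained in F
      have hcylopen : IsOpen {z : Cantor | ∀ m, m < σ.length → z m = x m} :=
        isOpen_cyl x σ.length
      have hnotsub : ¬ ({z : Cantor | ∀ m, m < σ.length → z m = x m} ⊆ F) := by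
        intro hsub
        have : {z : Cantor | ∀ m, m < σ.length → z m = x m} ⊆ interior F :=
          hcylopen.subset_interior_iff.mpr hsub
        rw [hFi] at this
        exact absurd (this (a := x) (fun m _ => rfl)) (Set.notMem_empty x)
      obtain ⟨z, hzc, hzF⟩ := Set.not_subset.mp hnotsub
      obtain ⟨N, hN⟩ := exists_cyl_subset (isOpen_compl_iff.mpr hFc) hzF
      refine ⟨res z (max N σ.length), ?_, ?_⟩
      · have h1 : res z σ.length = σ := by
          rw [res_agree.mpr hzc, hres]
        have h2 := res_prefix z (le_max_right N σ.length)
        rw [h1] at h2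
        exact h2
      · rintro ⟨x', hx', hres'⟩
        rw [res_length] at hres'
        have hag : ∀ m, m < max N σ.length → x' m = z m := res_agree.mp hres'
        exact hN x' (fun m hm => hag m (lt_of_lt_of_le hm (le_max_left _ _))) hx'
    have hsub : F ⊆ LimT T := fun x hx n => ⟨x, hx, by rw [res_length]⟩
    refine IsMeagre.mono ?_ (part1 h hpre hnwd)
    exact Set.add_subset_add_left hsub

/-- Theorem 18, (b) → (a). -/
theorem stmt15 (X : Set Cantor) (h : MatchProp X) :
    (∀ T : Set FinSeq, IsTree T → NwdTree T → IsMeagre (X + LimT T)) ∧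
      MeagerAdditive X := by
  constructor
  · intro T hT hnwd
    exact part1 h hT.2.1 hnwd
  · intro A hA
    rw [isMeagre_iff_countable_union_isNowhereDense] at hA
    obtain ⟨S, hSnwd, hScnt, hSsub⟩ := hA
    rcases S.eq_empty_or_nonempty with rfl | hSne
    · refine IsMeagre.mono ?_ IsMeagre.empty
      intro z hz
      rw [Set.mem_add] at hz
      obtain ⟨_, _, a, ha, _⟩ := hz
      obtain ⟨s, hs, _⟩ := hSsub ha
      exact absurd hs (Set.notMem_empty s)
    · obtain ⟨f, rfl⟩ := Set.Countable.exists_eq_range hScnt hSne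
      have hcov : X + A ⊆ ⋃ m, X + closure (f m) := by
        intro z hz
        rw [Set.mem_add] at hz
        obtain ⟨x, hx, a, ha, hxa⟩ := hz
        obtain ⟨s, ⟨m, rfl⟩, has⟩ := hSsub ha
        exact Set.mem_iUnion.mpr ⟨m, hxa ▸ Set.add_mem_add hx (subset_closure has)⟩
      refine IsMeagre.mono hcov (isMeagre_iUnion fun m => ?_)
      have hnwdm : IsNowhereDense (closure (f m)) := (hSnwd (f m) ⟨m, rfl⟩).closure
      exact part2 h isClosed_closure (isClosed_closure.isNowhereDense_iff.mp hnwdm)
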